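/- Let A ∈ ℝ^{N×N} be symmetric and M ∈ ℝ^{N×N} be diagonal and invertible. Suppose v, w : ℝ → ℝ^N satisfy the ODE system v' = M⁻¹ A w − β (v² + w²) ⊙ w and w' = −M⁻¹ A v + β (v² + w²) ⊙ v, where products and squares of vectors are componentwise. Then the discrete mass M(t) = vᵀ M v + wᵀ M w is constant in time. -/

import Mathlib

/-- Semidiscrete mass conservation for the SBP semidiscretization of NLS:
if `A` is symmetric, `M` is diagonal and invertible, and
`v' = M⁻¹ A w − β (v² + w²) ⊙ w`, `w' = −M⁻¹ A v + β (v² + w²) ⊙ v`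
(componentwise nonlinearity), then `vᵀ M v + wᵀ M w` is constant in time. -/
theorem semidiscrete_mass_conservation (N : ℕ) (β : ℝ)
    (A M : Matrix (Fin N) (Fin N) ℝ) (hA : A.IsSymm)
    (d : Fin N → ℝ) (hM : M = Matrix.diagonal d) (hMinv : Invertible M)
    (v w : ℝ → Fin N → ℝ)
    (hv : ∀ t : ℝ, HasDerivAt v
      (M⁻¹.mulVec (A.mulVec (w t))
        - fun i => β * (v t i ^ 2 + w t i ^ 2) * w t i) t)
    (hw : ∀ t : ℝ, HasDerivAt w
      (-(M⁻¹.mulVec (A.mulVec (v t)))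
        + fun i => β * (v t i ^ 2 + w t i ^ 2) * v t i) t) :
    ∀ t₁ t₂ : ℝ,
      dotProduct (v t₁) (M.mulVec (v t₁))
        + dotProduct (w t₁) (M.mulVec (w t₁))
      = dotProduct (v t₂) (M.mulVec (v t₂))
        + dotProduct (w t₂) (M.mulVec (w t₂)) := by
  have hd : ∀ i, d i ≠ 0 := by
    intro i
    have hdet : IsUnit M.det := (Matrix.isUnit_iff_isUnit_det M).mp (isUnit_of_invertible M)
    rw [hM, Matrix.det_diagonal] at hdet
    exact fun h => hdet.ne_zero (Finset.prod_eq_zero (Finset.mem_univ i) h)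
  have hMinveq : M⁻¹ = Matrix.diagonal (fun i => (d i)⁻¹) := by
    rw [hM]
    apply Matrix.inv_eq_right_inv
    rw [Matrix.diagonal_mul_diagonal]
    convert Matrix.diagonal_one with i
    exact mul_inv_cancel₀ (hd i)
  have hMiv : ∀ x : Fin N → ℝ, M⁻¹.mulVec x = fun i => (d i)⁻¹ * x i := by
    intro x
    rw [hMinveq]
    funext i
    rw [Matrix.mulVec_diagonal]
  have hE : ∀ (x : Fin N → ℝ), dotProduct x (M.mulVec x) = ∑ i, d i * x i ^ 2 := by
    intro x
    rw [hM]
    simp [dotProduct, Matrix.mulVec_diagonal]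
    congr 1; funext i; ring
  set f : ℝ → ℝ := fun t => ∑ i, d i * ((v t i) ^ 2 + (w t i) ^ 2) with hf
  have hconst : ∀ t, HasDerivAt f 0 t := by
    intro t
    have hvi := hasDerivAt_pi.mp (hv t)
    have hwi := hasDerivAt_pi.mp (hw t)
    set gv : Fin N → ℝ := M⁻¹.mulVec (A.mulVec (w t))
        - fun i => β * (v t i ^ 2 + w t i ^ 2) * w t i with hgv
    set gw : Fin N → ℝ := -(M⁻¹.mulVec (A.mulVec (v t)))
        + fun i => β * (v t i ^ 2 + w t i ^ 2) * v t i with hgw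
    have hsym : dotProduct (v t) (A.mulVec (w t))
        = dotProduct (w t) (A.mulVec (v t)) := by
      simp only [dotProduct, Matrix.mulVec, Finset.mul_sum]
      rw [Finset.sum_comm]
      refine Finset.sum_congr rfl fun i _ => Finset.sum_congr rfl fun j _ => ?_
      rw [hA.apply i j]
      ring
    have key : (∑ i, d i * (2 * v t i * gv i + 2 * w t i * gw i)) = 0 := by
      have hgv' : ∀ i, gv i = (d i)⁻¹ * (A.mulVec (w t)) i
          - β * (v t i ^ 2 + w t i ^ 2) * w t i := by
        intro i; rw [hgv, hMiv]; simp
      have hgw' : ∀ i, gw i = -((d i)⁻¹ * (A.mulVec (v t)) i)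
          + β * (v t i ^ 2 + w t i ^ 2) * v t i := by
        intro i; rw [hgw, hMiv]; simp
      have step : ∀ i, d i * (2 * v t i * gv i + 2 * w t i * gw i)
          = 2 * (v t i * (A.mulVec (w t)) i) - 2 * (w t i * (A.mulVec (v t)) i) := by
        intro i
        rw [hgv' i, hgw' i]
        have hinv : d i * (d i)⁻¹ = 1 := mul_inv_cancel₀ (hd i)
        field_simp
        linear_combination (v t i * A.mulVec (w t) i - w t i * A.mulVec (v t) i) * hinv
      rw [Finset.sum_congr rfl (fun i _ => step i), Finset.sum_sub_distrib,
        ← Finset.mul_sum, ← Finset.mul_sum]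
      rw [show (∑ i, v t i * A.mulVec (w t) i) = dotProduct (v t) (A.mulVec (w t))
          from rfl,
        show (∑ i, w t i * A.mulVec (v t) i) = dotProduct (w t) (A.mulVec (v t))
          from rfl, hsym, sub_self]
    have : HasDerivAt f (∑ i, d i * (2 * v t i * gv i + 2 * w t i * gw i)) t := by
      apply HasDerivAt.fun_sum
      intro i _
      exact (((hvi i).pow 2).add ((hwi i).pow 2)).const_mul (d i) |>.congr_deriv
        (by push_cast; ring)
    rwa [key] at this
  intro t₁ t₂
  have hfc : f t₁ = f t₂ := by
    have hdiff : Differentiable ℝ f := fun t => (hconst t).differentiableAt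
    have hderiv : ∀ t, deriv f t = 0 := fun t => (hconst t).deriv
    exact is_const_of_deriv_eq_zero hdiff hderiv t₁ t₂
  rw [hE, hE, hE, hE]
  calc (∑ i, d i * v t₁ i ^ 2) + ∑ i, d i * w t₁ i ^ 2 = f t₁ := by
        rw [hf]; simp [Finset.sum_add_distrib, mul_add]
    _ = f t₂ := hfc
    _ = (∑ i, d i * v t₂ i ^ 2) + ∑ i, d i * w t₂ i ^ 2 := by
        rw [hf]; simp [Finset.sum_add_distrib, mul_add]
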